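/- Under the hypotheses on H and W, the derivative of θ ↦ U(θ)†U(θ) equals -2 U(θ)†W(θ)U(θ), which is negative semidefinite; hence θ ↦ ⟨U(θ)†U(θ)v, v⟩ is nonincreasing for each fixed vector v ∈ ℂ^l. -/

import Mathlib

open Matrix ComplexOrder

theorem stmt6 (l : ℕ) (hl : 1 ≤ l) (s t : ℝ) (hst : s ≤ t)
    (H W : ℝ → Matrix (Fin l) (Fin l) ℂ)
    (hHcont : ∀ i j, ContinuousOn (fun θ => H θ i j) (Set.Icc s t))
    (hWcont : ∀ i j, ContinuousOn (fun θ => W θ i j) (Set.Icc s t))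
    (hH : ∀ θ ∈ Set.Icc s t, (H θ).IsHermitian)
    (hW : ∀ θ ∈ Set.Icc s t, (W θ).PosSemidef)
    (U : ℝ → Matrix (Fin l) (Fin l) ℂ)
    (hU0 : U s = 1)
    (hU : ∀ θ ∈ Set.Icc s t, ∀ i j,
      HasDerivAt (fun τ => U τ i j) ((-(Complex.I • H θ + W θ) * U θ) i j) θ) :
    (∀ θ ∈ Set.Icc s t, ∀ i j,
      HasDerivAt (fun τ => ((U τ)ᴴ * U τ) i j)
        (((-2 : ℂ) • ((U θ)ᴴ * W θ * U θ)) i j) θ) ∧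
    (∀ θ ∈ Set.Icc s t, ((U θ)ᴴ * W θ * U θ).PosSemidef) ∧
    (∀ v : Fin l → ℂ, AntitoneOn
      (fun θ => (star v ⬝ᵥ (((U θ)ᴴ * U θ) *ᵥ v)).re) (Set.Icc s t)) := by
  set A : ℝ → Matrix (Fin l) (Fin l) ℂ :=
    fun θ => -(Complex.I • H θ + W θ) * U θ with hA
  have key : ∀ θ ∈ Set.Icc s t,
      (A θ)ᴴ * U θ + (U θ)ᴴ * A θ = (-2 : ℂ) • ((U θ)ᴴ * W θ * U θ) := by
    intro θ hθ
    have hAH : (A θ)ᴴ = (U θ)ᴴ * (Complex.I • H θ - W θ) := by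
      simp [hA, conjTranspose_mul, conjTranspose_neg, conjTranspose_add,
        conjTranspose_smul, (hH θ hθ).eq, (hW θ hθ).1.eq, Complex.star_def,
        Complex.conj_I, sub_eq_add_neg, neg_add, neg_smul, Matrix.mul_add]
      abel
    have e1 : (A θ)ᴴ * U θ =
        (U θ)ᴴ * (Complex.I • H θ) * U θ - (U θ)ᴴ * W θ * U θ := by
      rw [hAH]; rw [Matrix.mul_sub, Matrix.sub_mul, Matrix.mul_assoc, Matrix.mul_assoc]
    have e2 : (U θ)ᴴ * A θ =
        -((U θ)ᴴ * (Complex.I • H θ) * U θ) - (U θ)ᴴ * W θ * U θ := by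
      rw [hA]
      show (U θ)ᴴ * (-(Complex.I • H θ + W θ) * U θ) = _
      rw [Matrix.neg_mul, Matrix.add_mul, Matrix.mul_neg, Matrix.mul_add,
        neg_add, ← Matrix.mul_assoc, ← Matrix.mul_assoc, sub_eq_add_neg]
    rw [e1, e2]
    module
  have hD : ∀ θ ∈ Set.Icc s t, ∀ i j,
      HasDerivAt (fun τ => ((U τ)ᴴ * U τ) i j)
        (((A θ)ᴴ * U θ + (U θ)ᴴ * A θ) i j) θ := by
    intro θ hθ i j
    have hfun : (fun τ => ((U τ)ᴴ * U τ) i j)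
        = fun τ => ∑ k, star (U τ k i) * U τ k j := by
      funext τ; simp [Matrix.mul_apply, Matrix.conjTranspose_apply]
    rw [hfun]
    have h := HasDerivAt.fun_sum (u := Finset.univ)
      (fun k _ => ((hU θ hθ k i).star.mul (hU θ hθ k j) :
        HasDerivAt (fun τ => star (U τ k i) * U τ k j) _ θ))
    refine h.congr_deriv (Eq.symm ?_)
    rw [hA]
    simp only [Matrix.add_apply, Matrix.mul_apply, Matrix.conjTranspose_apply,
      Finset.sum_add_distrib]
  have part1 : ∀ θ ∈ Set.Icc s t, ∀ i j,
      HasDerivAt (fun τ => ((U τ)ᴴ * U τ) i j)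
        (((-2 : ℂ) • ((U θ)ᴴ * W θ * U θ)) i j) θ := by
    intro θ hθ i j
    have := hD θ hθ i j
    rwa [key θ hθ] at this
  have part2 : ∀ θ ∈ Set.Icc s t, ((U θ)ᴴ * W θ * U θ).PosSemidef :=
    fun θ hθ => (hW θ hθ).conjTranspose_mul_mul_same (U θ)
  refine ⟨part1, part2, ?_⟩
  intro v
  have hfd : ∀ θ ∈ Set.Icc s t,
      HasDerivAt (fun τ => (star v ⬝ᵥ (((U τ)ᴴ * U τ) *ᵥ v)).re)
        ((star v ⬝ᵥ ((((-2 : ℂ) • ((U θ)ᴴ * W θ * U θ)) *ᵥ v))).re) θ := by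
    intro θ hθ
    have hexp : ∀ M : Matrix (Fin l) (Fin l) ℂ,
        star v ⬝ᵥ (M *ᵥ v) = ∑ i, ∑ j, star (v i) * M i j * v j := by
      intro M
      simp [dotProduct, Matrix.mulVec, Finset.mul_sum, mul_assoc]
    have hg : HasDerivAt (fun τ => star v ⬝ᵥ (((U τ)ᴴ * U τ) *ᵥ v))
        (star v ⬝ᵥ ((((-2 : ℂ) • ((U θ)ᴴ * W θ * U θ)) *ᵥ v))) θ := by
      simp only [hexp]
      exact HasDerivAt.fun_sum fun i _ => HasDerivAt.fun_sum fun j _ =>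
        ((part1 θ hθ i j).const_mul (star (v i))).mul_const (v j)
    exact Complex.reCLM.hasFDerivAt.comp_hasDerivAt θ hg
  apply antitoneOn_of_deriv_nonpos (convex_Icc s t)
  · exact fun x hx => (hfd x hx).continuousAt.continuousWithinAt
  · intro x hx
    rw [interior_Icc] at hx
    exact ((hfd x (Set.Ioo_subset_Icc_self hx)).differentiableAt).differentiableWithinAt
  · intro x hx
    rw [interior_Icc] at hx
    have hx' := Set.Ioo_subset_Icc_self hx
    rw [(hfd x hx').deriv]
    have h0 : 0 ≤ (star v ⬝ᵥ (((U x)ᴴ * W x * U x) *ᵥ v)).re := by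
      simpa using (part2 x hx').re_dotProduct_nonneg v
    have hrw : star v ⬝ᵥ ((((-2 : ℂ) • ((U x)ᴴ * W x * U x)) *ᵥ v))
        = (-2 : ℂ) * (star v ⬝ᵥ (((U x)ᴴ * W x * U x) *ᵥ v)) := by
      rw [Matrix.smul_mulVec, dotProduct_smul, smul_eq_mul]
    rw [hrw]
    simp only [Complex.mul_re]
    norm_num
    linarith
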